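/- arXiv:2006.00734 — 4 statements merged into one kernel-verified Lean document; each statement's English description precedes it below -/
import Mathlib

section
/- Every 3-dimensional nilpotent algebra over the complex numbers is a CD-algebra. -/
/-- The three degree-4 identities defining a CD-algebra. -/
def IsCD {A : Type*} [AddCommGroup A] (m : A → A → A) : Prop :=
  (∀ a b x y : A,
      m (m (m x y) a) b - m (m (m x y) b) a =
        m (m (m x a) b - m (m x b) a) y + m x (m (m y a) b - m (m y b) a)) ∧
  (∀ a b x y : A,
      m (m a (m x y)) b - m a (m (m x y) b) =
        m (m (m a x) b - m a (m x b)) y + m x (m (m a y) b - m a (m y b))) ∧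
  (∀ a b x y : A,
      m a (m b (m x y)) - m b (m a (m x y)) =
        m (m a (m b x) - m b (m a x)) y + m x (m a (m b y) - m b (m a y)))

/-- The CD-cocycle conditions for a map `θ : A × A → V`. -/
def IsCDCocycle {A V : Type*} [AddCommGroup A] [AddCommGroup V]
    (m : A → A → A) (θ : A → A → V) : Prop :=
  (∀ a b x y : A,
      θ (m (m x y) a) b - θ (m (m x y) b) a =
        θ (m (m x a) b - m (m x b) a) y + θ x (m (m y a) b - m (m y b) a)) ∧
  (∀ a b x y : A,
      θ (m a (m x y)) b - θ a (m (m x y) b) =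
        θ (m (m a x) b - m a (m x b)) y + θ x (m (m a y) b - m a (m y b))) ∧
  (∀ a b x y : A,
      θ a (m b (m x y)) - θ b (m a (m x y)) =
        θ (m a (m b x) - m b (m a x)) y + θ x (m a (m b y) - m b (m a y)))

/-- Evaluation of a nonassociative word in `A` under the multiplication `m`. -/
def magEval {A : Type*} (m : A → A → A) : FreeMagma A → A
  | FreeMagma.of a => a
  | FreeMagma.mul x y => m (magEval m x) (magEval m y)

/-- The number of letters of a nonassociative word. -/
def magLen {A : Type*} : FreeMagma A → ℕ
  | FreeMagma.of _ => 1
  | FreeMagma.mul x y => magLen x + magLen y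

/-- An algebra is nilpotent iff all sufficiently long products vanish. -/
def IsNilpotentMul {A : Type*} [AddCommGroup A] (m : A → A → A) : Prop :=
  ∃ n : ℕ, ∀ w : FreeMagma A, n ≤ magLen w → magEval m w = 0


section CDAux

lemma one_le_magLen {X : Type*} : ∀ w : FreeMagma X, 1 ≤ magLen w
  | FreeMagma.of _ => le_refl 1
  | FreeMagma.mul u v => by
      have := one_le_magLen u
      simp only [magLen]; omega

variable {A : Type*} [AddCommGroup A] [Module ℂ A]

/-- Span of evaluations of all words of length at least `k`. -/
def Bp (m : A →ₗ[ℂ] A →ₗ[ℂ] A) (k : ℕ) : Submodule ℂ A :=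
  Submodule.span ℂ
    {x : A | ∃ w : FreeMagma A, k ≤ magLen w ∧ magEval (fun a b : A => m a b) w = x}

variable (m : A →ₗ[ℂ] A →ₗ[ℂ] A)

lemma mem_Bp_of_word (w : FreeMagma A) {k : ℕ} (h : k ≤ magLen w) :
    magEval (fun a b : A => m a b) w ∈ Bp m k :=
  Submodule.subset_span ⟨w, h, rfl⟩

lemma Bp_mono {j k : ℕ} (h : j ≤ k) : Bp m k ≤ Bp m j :=
  Submodule.span_mono (fun x hx => by
    obtain ⟨w, hw, he⟩ := hx; exact ⟨w, le_trans h hw, he⟩)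

lemma mem_Bp_one (x : A) : x ∈ Bp m 1 := by
  have := mem_Bp_of_word m (FreeMagma.of x) (k := 1) (by simp [magLen])
  simpa [magEval] using this

lemma mul_word_mem {i j : ℕ} (w : FreeMagma A) (hw : i ≤ magLen w)
    {y : A} (hy : y ∈ Bp m j) :
    m (magEval (fun a b : A => m a b) w) y ∈ Bp m (i + j) := by
  have hle : Bp m j ≤ Submodule.comap (m (magEval (fun a b : A => m a b) w)) (Bp m (i + j)) := by
    rw [Bp, Submodule.span_le]
    rintro x ⟨w', hw', rfl⟩
    have := mem_Bp_of_word m (FreeMagma.mul w w')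
      (k := i + j) (by simp only [magLen]; omega)
    simpa [magEval] using this
  exact hle hy

lemma mul_mem_Bp {i j : ℕ} {x y : A} (hx : x ∈ Bp m i) (hy : y ∈ Bp m j) :
    m x y ∈ Bp m (i + j) := by
  have hle : Bp m i ≤ Submodule.comap (m.flip y) (Bp m (i + j)) := by
    rw [Bp, Submodule.span_le]
    rintro x ⟨w, hw, rfl⟩
    simpa using mul_word_mem m w hw hy
  simpa using hle hx

lemma mem_Bp_two (x y : A) : m x y ∈ Bp m 2 := by
  have := mul_mem_Bp m (mem_Bp_one m x) (mem_Bp_one m y)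
  rwa [show (1:ℕ) + 1 = 2 from rfl] at this

lemma step1 (h : Bp m 1 ≤ Bp m 2) : ∀ k : ℕ, Bp m 1 ≤ Bp m (k + 1) := by
  intro k
  induction k with
  | zero => exact le_rfl
  | succ k ih =>
    refine le_trans h ?_
    rw [Bp, Submodule.span_le]
    rintro x ⟨w, hw, rfl⟩
    cases w with
    | of a => simp [magLen] at hw
    | mul u v =>
      have hu : magEval (fun a b : A => m a b) u ∈ Bp m (k + 1) :=
        ih (mem_Bp_of_word m u (one_le_magLen u))
      have hv : magEval (fun a b : A => m a b) v ∈ Bp m 1 :=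
        mem_Bp_of_word m v (one_le_magLen v)
      have := mul_mem_Bp m hu hv
      simpa [magEval] using this

lemma step2 (h : Bp m 2 ≤ Bp m 3) : ∀ k : ℕ, Bp m 2 ≤ Bp m (k + 2) := by
  intro k
  induction k with
  | zero => exact le_rfl
  | succ k ih =>
    refine le_trans h ?_
    rw [Bp, Submodule.span_le]
    rintro x ⟨w, hw, rfl⟩
    cases w with
    | of a => simp [magLen] at hw
    | mul u v =>
      simp only [magLen] at hw
      by_cases hcu : 2 ≤ magLen u
      · have hu : magEval (fun a b : A => m a b) u ∈ Bp m (k + 2) :=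
          ih (mem_Bp_of_word m u hcu)
        have hv : magEval (fun a b : A => m a b) v ∈ Bp m 1 :=
          mem_Bp_of_word m v (one_le_magLen v)
        have := mul_mem_Bp m hu hv
        rw [show k + 2 + 1 = k + 1 + 2 from rfl] at this
        simpa [magEval] using this
      · have hcv : 2 ≤ magLen v := by
          have := one_le_magLen u; omega
        have hv : magEval (fun a b : A => m a b) v ∈ Bp m (k + 2) :=
          ih (mem_Bp_of_word m v hcv)
        have hu : magEval (fun a b : A => m a b) u ∈ Bp m 1 :=
          mem_Bp_of_word m u (one_le_magLen u)
        have := mul_mem_Bp m hu hv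
        rw [show 1 + (k + 2) = k + 1 + 2 by omega] at this
        simpa [magEval] using this

end CDAux

/-- Every 3-dimensional nilpotent complex algebra is a CD-algebra. -/
theorem threeDim_nilpotent_is_CD {A : Type*} [AddCommGroup A] [Module ℂ A]
    (m : A →ₗ[ℂ] A →ₗ[ℂ] A)
    (hdim : Module.finrank ℂ A = 3)
    (hnil : IsNilpotentMul (fun a b : A => m a b)) :
    IsCD (fun a b : A => m a b) := by
  classical
  haveI : FiniteDimensional ℂ A := FiniteDimensional.of_finrank_pos (by omega)
  obtain ⟨n, hn⟩ := hnil
  -- all long products vanish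
  have hBn : Bp m n = ⊥ := by
    rw [Bp, Submodule.span_eq_bot]
    rintro x ⟨w, hw, rfl⟩
    exact hn w hw
  -- Bp m 1 = ⊤
  have hB1 : Bp m 1 = ⊤ := by
    rw [eq_top_iff]
    intro x _
    exact mem_Bp_one m x
  -- annihilation of Bp m 3
  have key : ∀ p ∈ Bp m 3, ∀ x : A, m p x = 0 ∧ m x p = 0 := by
    by_cases h3bot : Bp m 3 = ⊥
    · intro p hp x
      rw [h3bot, Submodule.mem_bot] at hp
      subst hp
      simp
    · have h23 : ¬ Bp m 2 ≤ Bp m 3 := by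
        intro h
        have hb : Bp m (n + 2) ≤ ⊥ := hBn ▸ Bp_mono m (Nat.le_add_right n 2)
        have h2 : Bp m 2 = ⊥ := le_bot_iff.mp (le_trans (step2 m h n) hb)
        exact h3bot (le_bot_iff.mp (le_trans (Bp_mono m (by omega)) h2.le))
      have h12 : ¬ Bp m 1 ≤ Bp m 2 := by
        intro h
        have hb : Bp m (n + 1) ≤ ⊥ := hBn ▸ Bp_mono m (Nat.le_add_right n 1)
        have h1 : Bp m 1 = ⊥ := le_bot_iff.mp (le_trans (step1 m h n) hb)
        exact h3bot (le_bot_iff.mp (le_trans (Bp_mono m (by omega)) h1.le))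
      have lt3 : Bp m 3 < Bp m 2 :=
        lt_of_le_of_ne (Bp_mono m (by omega)) (fun he => h23 he.ge)
      have lt2 : Bp m 2 ≠ ⊤ := fun he => h12 (le_trans le_top he.ge)
      have fr2 : Module.finrank ℂ (Bp m 2) < 3 := by
        rw [← hdim]
        exact Submodule.finrank_lt lt2
      have fr3 : Module.finrank ℂ (Bp m 3) < Module.finrank ℂ (Bp m 2) :=
        Submodule.finrank_lt_finrank_of_lt lt3
      obtain ⟨z, hz, hz0⟩ := Submodule.exists_mem_ne_zero_of_ne_bot h3bot
      have hspan : Submodule.span ℂ {z} = Bp m 3 := by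
        refine Submodule.eq_of_le_of_finrank_le ?_ ?_
        · rw [Submodule.span_le]
          simpa using hz
        · rw [finrank_span_singleton hz0]
          omega
      have hzx : ∀ x : A, m z x = 0 := by
        intro x
        have hmem : m z x ∈ Bp m 3 := by
          have := mul_mem_Bp m hz (mem_Bp_one m x)
          exact Bp_mono m (by omega) this
        rw [← hspan, Submodule.mem_span_singleton] at hmem
        obtain ⟨c, hc⟩ := hmem
        have hpow : ∀ k : ℕ, (c ^ k) • z ∈ Bp m (3 + k) := by
          intro k
          induction k with
          | zero => simpa using hz
          | succ k ih =>
            have h1 : m ((c ^ k) • z) x ∈ Bp m (3 + k + 1) :=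
              mul_mem_Bp m ih (mem_Bp_one m x)
            have h2 : m ((c ^ k) • z) x = (c ^ (k + 1)) • z := by
              rw [map_smul, LinearMap.smul_apply, ← hc, smul_smul, ← pow_succ]
            rw [h2] at h1
            exact h1
        have hzero : (c ^ n) • z = 0 := by
          have hmem2 := hpow n
          have hb : Bp m (3 + n) ≤ ⊥ := hBn ▸ Bp_mono m (by omega)
          simpa using hb hmem2
        have hc0 : c = 0 := by
          rcases smul_eq_zero.mp hzero with h | h
          · exact (pow_eq_zero_iff'.mp h).1
          · exact absurd h hz0
        rw [← hc, hc0, zero_smul]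
      have hxz : ∀ x : A, m x z = 0 := by
        intro x
        have hmem : m x z ∈ Bp m 3 := by
          have := mul_mem_Bp m (mem_Bp_one m x) hz
          exact Bp_mono m (by omega) this
        rw [← hspan, Submodule.mem_span_singleton] at hmem
        obtain ⟨c, hc⟩ := hmem
        have hpow : ∀ k : ℕ, (c ^ k) • z ∈ Bp m (3 + k) := by
          intro k
          induction k with
          | zero => simpa using hz
          | succ k ih =>
            have h1 : m x ((c ^ k) • z) ∈ Bp m (1 + (3 + k)) :=
              mul_mem_Bp m (mem_Bp_one m x) ih
            have h2 : m x ((c ^ k) • z) = (c ^ (k + 1)) • z := by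
              rw [map_smul, ← hc, smul_smul, ← pow_succ]
            rw [h2, show 1 + (3 + k) = 3 + (k + 1) by omega] at h1
            exact h1
        have hzero : (c ^ n) • z = 0 := by
          have hmem2 := hpow n
          have hb : Bp m (3 + n) ≤ ⊥ := hBn ▸ Bp_mono m (by omega)
          simpa using hb hmem2
        have hc0 : c = 0 := by
          rcases smul_eq_zero.mp hzero with h | h
          · exact (pow_eq_zero_iff'.mp h).1
          · exact absurd h hz0
        rw [← hc, hc0, zero_smul]
      intro p hp x
      rw [← hspan, Submodule.mem_span_singleton] at hp
      obtain ⟨a, ha⟩ := hp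
      constructor
      · rw [← ha, map_smul, LinearMap.smul_apply, hzx x, smul_zero]
      · rw [← ha, map_smul, hxz x, smul_zero]
  have hL : ∀ p ∈ Bp m 3, ∀ x : A, m p x = 0 := fun p hp x => (key p hp x).1
  have hR : ∀ p ∈ Bp m 3, ∀ x : A, m x p = 0 := fun p hp x => (key p hp x).2
  -- all length-3 products are in Bp m 3
  have h3L : ∀ x y z : A, m (m x y) z ∈ Bp m 3 := fun x y z => by
    have := mul_mem_Bp m (mem_Bp_two m x y) (mem_Bp_one m z)
    rwa [show (2:ℕ) + 1 = 3 from rfl] at this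
  have h3R : ∀ x y z : A, m z (m x y) ∈ Bp m 3 := fun x y z => by
    have := mul_mem_Bp m (mem_Bp_one m z) (mem_Bp_two m x y)
    rwa [show (1:ℕ) + 2 = 3 from rfl] at this
  refine ⟨?_, ?_, ?_⟩ <;> intro a b x y <;> simp only []
  · rw [hL _ (h3L x y a) b, hL _ (h3L x y b) a,
      hL _ (sub_mem (h3L x a b) (h3L x b a)) y,
      hR _ (sub_mem (h3L y a b) (h3L y b a)) x]
    simp
  · rw [hL _ (h3R x y a) b, hR _ (h3L x y b) a,
      hL _ (sub_mem (h3L a x b) (h3R x b a)) y,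
      hR _ (sub_mem (h3L a y b) (h3R y b a)) x]
    simp
  · rw [hR _ (h3R x y b) a, hR _ (h3R x y a) b,
      hL _ (sub_mem (h3R b x a) (h3R a x b)) y,
      hR _ (sub_mem (h3R b y a) (h3R a y b)) x]
    simp
end

section
/- Let A be an n-dimensional CD-algebra over ℂ with annihilator Ann(A) of dimension m ≠ 0. Then there exists an (n−m)-dimensional CD-algebra A' and a CD-cocycle θ ∈ Z²_CD(A', V) with Ann(A') ∩ Ann(θ) = 0, where V is an m-dimensional vector space, such that A ≅ A'_θ and A/Ann(A) ≅ A'. -/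
/-- CD identities transfer along a surjective multiplicative additive map. -/
lemma transferCD {A B : Type*} [AddCommGroup A] [AddCommGroup B]
    (m : A → A → A) (m' : B → B → B) (f : A → B) (hf : Function.Surjective f)
    (hmul : ∀ x y, m' (f x) (f y) = f (m x y))
    (hsub : ∀ x y : A, f x - f y = f (x - y))
    (hadd : ∀ x y : A, f x + f y = f (x + y))
    (h : IsCD m) : IsCD m' := by
  obtain ⟨h1, h2, h3⟩ := h
  refine ⟨?_, ?_, ?_⟩ <;> intro a b x y <;>
    obtain ⟨a, rfl⟩ := hf a <;> obtain ⟨b, rfl⟩ := hf b <;>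
    obtain ⟨x, rfl⟩ := hf x <;> obtain ⟨y, rfl⟩ := hf y <;>
    simp only [hmul, hsub, hadd]
  exacts [congrArg f (h1 a b x y), congrArg f (h2 a b x y), congrArg f (h3 a b x y)]

/-- Cocycle identities for `θ` obtained by postcomposing `m` with an additive map. -/
lemma transferCocycle {A B V : Type*} [AddCommGroup A] [AddCommGroup B] [AddCommGroup V]
    (m : A → A → A) (m' : B → B → B) (θ : B → B → V) (f : A → B) (g : A → V)
    (hf : Function.Surjective f)
    (hmul : ∀ x y, m' (f x) (f y) = f (m x y))
    (hsub : ∀ x y : A, f x - f y = f (x - y))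
    (hθ : ∀ x y, θ (f x) (f y) = g (m x y))
    (hgsub : ∀ x y : A, g x - g y = g (x - y))
    (hgadd : ∀ x y : A, g x + g y = g (x + y))
    (h : IsCD m) : IsCDCocycle m' θ := by
  obtain ⟨h1, h2, h3⟩ := h
  refine ⟨?_, ?_, ?_⟩ <;> intro a b x y <;>
    obtain ⟨a, rfl⟩ := hf a <;> obtain ⟨b, rfl⟩ := hf b <;>
    obtain ⟨x, rfl⟩ := hf x <;> obtain ⟨y, rfl⟩ := hf y <;>
    simp only [hmul, hsub, hθ, hgsub, hgadd]
  exacts [congrArg g (h1 a b x y), congrArg g (h2 a b x y), congrArg g (h3 a b x y)]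

/-- Every n-dimensional CD-algebra with nonzero annihilator is a central extension
of the (n-m)-dimensional CD-algebra A/Ann(A) by a cocycle θ with Ann(A/Ann A) ∩ Ann(θ) = 0. -/
theorem CD_is_central_extension {A : Type*} [AddCommGroup A] [Module ℂ A]
    [FiniteDimensional ℂ A]
    (m : A →ₗ[ℂ] A →ₗ[ℂ] A) (hCD : IsCD (fun a b : A => m a b))
    (N : Submodule ℂ A)
    (hN : (N : Set A) = {x : A | ∀ a : A, m x a = 0 ∧ m a x = 0})
    (hm : N ≠ ⊥) :
    ∃ (m' : (A ⧸ N) →ₗ[ℂ] (A ⧸ N) →ₗ[ℂ] (A ⧸ N))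
      (θ : (A ⧸ N) →ₗ[ℂ] (A ⧸ N) →ₗ[ℂ] N),
      IsCD (fun a b : A ⧸ N => m' a b) ∧
      IsCDCocycle (fun a b : A ⧸ N => m' a b) (fun a b => θ a b) ∧
      (∀ x y : A, m' (N.mkQ x) (N.mkQ y) = N.mkQ (m x y)) ∧
      ({x : A ⧸ N | ∀ a : A ⧸ N, m' x a = 0 ∧ m' a x = 0} ∩
         {x : A ⧸ N | ∀ a : A ⧸ N, θ x a = 0 ∧ θ a x = 0} = {0}) ∧
      ∃ φ : A ≃ₗ[ℂ] (A ⧸ N) × N,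
        ∀ x y : A, φ (m x y) = (m' (φ x).1 (φ y).1, θ (φ x).1 (φ y).1) := by
  classical
  -- annihilator property
  have hann : ∀ n : A, n ∈ N → ∀ a : A, m n a = 0 ∧ m a n = 0 := by
    intro n hn
    rw [← SetLike.mem_coe, hN] at hn
    exact hn
  -- choose a complement
  obtain ⟨W, hW⟩ := Submodule.exists_isCompl N
  let e : (A ⧸ N) ≃ₗ[ℂ] W := Submodule.quotientEquivOfIsCompl N W hW
  let s : (A ⧸ N) →ₗ[ℂ] A := W.subtype.comp e.toLinearMap
  let p : A →ₗ[ℂ] N := N.linearProjOfIsCompl W hW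
  have hsQ : ∀ z : A ⧸ N, N.mkQ (s z) = z := by
    intro z
    exact Submodule.mk_quotientEquivOfIsCompl_apply hW z
  have hsW : ∀ z : A ⧸ N, s z ∈ W := fun z => (e z).2
  have hpN : ∀ n : A, ∀ hn : n ∈ N, (p n : A) = n := by
    intro n hn
    exact congrArg Subtype.val (Submodule.linearProjOfIsCompl_apply_left hW ⟨n, hn⟩)
  have hpW : ∀ a : A, a ∈ W → p a = 0 := fun a ha =>
    Submodule.projectionOnto_apply_of_mem_right hW ha
  have memN : ∀ v : A, N.mkQ v = 0 → v ∈ N := by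
    intro v hv
    rwa [Submodule.mkQ_apply, Submodule.Quotient.mk_eq_zero] at hv
  -- the representative-independence of products
  have hmemN : ∀ x : A, s (N.mkQ x) - x ∈ N := by
    intro x
    exact memN _ (by rw [map_sub, hsQ, sub_self])
  have hrep : ∀ x y : A, m (s (N.mkQ x)) (s (N.mkQ y)) = m x y := by
    intro x y
    have hx := hmemN x
    have hy := hmemN y
    have ex : s (N.mkQ x) = x + (s (N.mkQ x) - x) := by abel
    have ey : s (N.mkQ y) = y + (s (N.mkQ y) - y) := by abel
    have ha1 : ∀ a : A, m (s (N.mkQ x) - x) a = 0 := fun a => (hann _ hx a).1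
    have ha2 : ∀ a : A, m a (s (N.mkQ y) - y) = 0 := fun a => (hann _ hy a).2
    rw [ex, ey]
    simp only [map_add, LinearMap.add_apply, ha1, ha2, add_zero, zero_add]
  -- define the multiplication and cocycle
  set m' : (A ⧸ N) →ₗ[ℂ] (A ⧸ N) →ₗ[ℂ] (A ⧸ N) := (m.compl₁₂ s s).compr₂ N.mkQ with hm'def
  set θ : (A ⧸ N) →ₗ[ℂ] (A ⧸ N) →ₗ[ℂ] N := (m.compl₁₂ s s).compr₂ p with hθdef
  have hm'app : ∀ u v : A ⧸ N, m' u v = N.mkQ (m (s u) (s v)) := by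
    intro u v; rfl
  have hθapp : ∀ u v : A ⧸ N, θ u v = p (m (s u) (s v)) := by
    intro u v; rfl
  have hmk : ∀ x y : A, m' (N.mkQ x) (N.mkQ y) = N.mkQ (m x y) := by
    intro x y; rw [hm'app, hrep]
  have hθk : ∀ x y : A, θ (N.mkQ x) (N.mkQ y) = p (m x y) := by
    intro x y; rw [hθapp, hrep]
  have hsurj : Function.Surjective (N.mkQ) := Submodule.mkQ_surjective N
  refine ⟨m', θ, ?_, ?_, hmk, ?_, ?_⟩
  · -- IsCD for m'
    exact transferCD _ _ (N.mkQ) hsurj hmk (fun x y => (map_sub _ _ _).symm)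
      (fun x y => (map_add _ _ _).symm) hCD
  · -- cocycle
    exact transferCocycle _ _ _ (N.mkQ) (fun v => p v) hsurj hmk
      (fun x y => (map_sub _ _ _).symm) hθk
      (fun x y => (map_sub _ _ _).symm) (fun x y => (map_add _ _ _).symm) hCD
  · -- annihilator intersection
    ext z
    simp only [Set.mem_inter_iff, Set.mem_setOf_eq, Set.mem_singleton_iff]
    constructor
    · rintro ⟨h1, h2⟩
      have hz : N.mkQ (s z) = z := hsQ z
      have hzero : s z = 0 := by
        have hmemW : s z ∈ W := hsW z
        have hmem : s z ∈ N := by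
          rw [← SetLike.mem_coe, hN]
          intro a
          have hma : m (s z) a ∈ N := by
            refine memN _ ?_
            have := (h1 (N.mkQ a)).1
            rw [← hz, hmk] at this
            exact this
          have hma' : m a (s z) ∈ N := by
            refine memN _ ?_
            have := (h1 (N.mkQ a)).2
            rw [← hz, hmk] at this
            exact this
          have hpa : p (m (s z) a) = 0 := by
            have := (h2 (N.mkQ a)).1
            rw [← hz, hθk] at this
            exact this
          have hpa' : p (m a (s z)) = 0 := by
            have := (h2 (N.mkQ a)).2
            rw [← hz, hθk] at this
            exact this
          constructor
          · have := hpN _ hma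
            rw [hpa] at this
            simpa using this.symm
          · have := hpN _ hma'
            rw [hpa'] at this
            simpa using this.symm
        have : s z ∈ N ⊓ W := ⟨hmem, hmemW⟩
        rw [hW.inf_eq_bot] at this
        simpa using this
      rw [← hz, hzero, map_zero]
    · rintro rfl
      exact ⟨fun a => by simp, fun a => by simp⟩
  · -- the linear equivalence
    have hGF : ∀ x : A, s (N.mkQ x) + (N.subtype (p x)) = x := by
      intro x
      have hd : x - s (N.mkQ x) ∈ N := by
        have : x - s (N.mkQ x) = -(s (N.mkQ x) - x) := by abel
        rw [this]
        exact neg_mem (hmemN x)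
      have h1 : p x = ⟨x - s (N.mkQ x), hd⟩ := by
        have hx : x = s (N.mkQ x) + (x - s (N.mkQ x)) := by abel
        conv_lhs => rw [hx]
        rw [map_add, hpW _ (hsW _), zero_add]
        exact Submodule.linearProjOfIsCompl_apply_left hW ⟨x - s (N.mkQ x), hd⟩
      rw [h1]
      simp only [Submodule.subtype_apply]
      abel
    refine ⟨LinearEquiv.ofLinear ((N.mkQ).prod p)
      (s.comp (LinearMap.fst ℂ (A ⧸ N) N) + N.subtype.comp (LinearMap.snd ℂ (A ⧸ N) N))
      ?_ ?_, ?_⟩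
    · apply LinearMap.ext
      rintro ⟨u, n⟩
      simp only [LinearMap.comp_apply, LinearMap.add_apply, LinearMap.prod_apply,
        LinearMap.fst_apply, LinearMap.snd_apply, Function.prod, LinearMap.id_apply,
        Submodule.subtype_apply, map_add]
      rw [Prod.mk_add_mk, Prod.mk.injEq]
      refine ⟨?_, ?_⟩
      · rw [hsQ]
        have hn0 : N.mkQ (n : A) = 0 := by
          rw [Submodule.mkQ_apply, Submodule.Quotient.mk_eq_zero]; exact n.2
        rw [hn0, add_zero]
      · rw [hpW _ (hsW u), zero_add]
        exact Submodule.linearProjOfIsCompl_apply_left hW n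
    · apply LinearMap.ext
      intro x
      simp only [LinearMap.comp_apply, LinearMap.add_apply, LinearMap.prod_apply,
        LinearMap.fst_apply, LinearMap.snd_apply, Pi.prod, LinearMap.id_apply]
      exact hGF x
    · intro x y
      simp only [LinearEquiv.ofLinear_apply, LinearMap.prod_apply, Pi.prod]
      exact Prod.ext (hmk x y).symm (hθk x y).symm
end

section
/- Let A be the 3-dimensional complex algebra with basis e1, e2, e3 and only nonzero product e1e1 = e2. Then the automorphism group of A consists exactly of the linear maps whose matrix in the basis (e1, e2, e3) has the form [[x,0,0],[y,x²,u],[z,0,v]] with x(x²v − 0) ≠ 0, i.e. x ≠ 0 and v ≠ 0. -/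
/-- Basis vectors of ℂ³. -/
noncomputable def e3 (i : Fin 3) : Fin 3 → ℂ := Pi.single i 1

/-- The algebra with e1e1 = e2 (all other products zero). -/
noncomputable def mulCD3s01 (u v : Fin 3 → ℂ) : Fin 3 → ℂ :=
  Pi.single (1 : Fin 3) (u 0 * v 0)

lemma decomp3 (w : Fin 3 → ℂ) : w = w 0 • e3 0 + w 1 • e3 1 + w 2 • e3 2 := by
  funext i; fin_cases i <;> simp [e3, Pi.single_apply]

lemma mul_eq_smul (u v : Fin 3 → ℂ) : mulCD3s01 u v = (u 0 * v 0) • e3 1 := by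
  funext i; fin_cases i <;> simp [mulCD3s01, e3, Pi.single_apply]

/-- The automorphisms of the algebra e1e1 = e2 are exactly the maps with matrix
[[x,0,0],[y,x²,u],[z,0,v]] with x ≠ 0 and v ≠ 0. -/
theorem aut_of_CD3s01 (φ : (Fin 3 → ℂ) ≃ₗ[ℂ] (Fin 3 → ℂ)) :
    (∀ u v : Fin 3 → ℂ, φ (mulCD3s01 u v) = mulCD3s01 (φ u) (φ v)) ↔
      ∃ x y z u v : ℂ, x ≠ 0 ∧ v ≠ 0 ∧
        φ (e3 0) = x • e3 0 + y • e3 1 + z • e3 2 ∧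
        φ (e3 1) = (x ^ 2) • e3 1 ∧
        φ (e3 2) = u • e3 1 + v • e3 2 := by
  constructor
  · intro h
    set x := φ (e3 0) 0 with hx
    have he : mulCD3s01 (e3 0) (e3 0) = e3 1 := by
      funext i; fin_cases i <;> simp [mulCD3s01, e3, Pi.single_apply]
    have h1 : φ (e3 1) = (x * x) • e3 1 := by
      have h1 := h (e3 0) (e3 0)
      rw [he, mul_eq_smul, ← hx] at h1
      exact h1
    have hxne : x ≠ 0 := by
      intro hx0
      rw [hx0] at h1
      simp at h1
      have : e3 1 = (0 : Fin 3 → ℂ) := φ.injective (by rw [h1, map_zero])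
      have := congrFun this 1
      simp [e3, Pi.single_apply] at this
    have he2 : mulCD3s01 (e3 2) (e3 2) = 0 := by
      funext i; fin_cases i <;> simp [mulCD3s01, e3, Pi.single_apply]
    have hw0 : φ (e3 2) 0 = 0 := by
      have h2 := h (e3 2) (e3 2)
      rw [he2, mul_eq_smul, map_zero] at h2
      have := congrFun h2.symm 1
      simp [e3, Pi.single_apply] at this
      exact this
    refine ⟨x, φ (e3 0) 1, φ (e3 0) 2, φ (e3 2) 1, φ (e3 2) 2, hxne, ?_, ?_, ?_, ?_⟩
    · -- v ≠ 0
      intro hv0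
      have hrep : φ (e3 2) = φ (e3 2) 1 • e3 1 := by
        conv_lhs => rw [decomp3 (φ (e3 2))]
        rw [hw0, hv0]; simp
      have key : φ ((φ (e3 2) 1 / (x * x)) • e3 1) = φ (e3 2) := by
        rw [map_smul, h1, hrep, smul_smul]
        congr 1; field_simp [e3, Pi.single_apply]; simp [e3]
      have := φ.injective key
      have := congrFun this 2
      simp [e3, Pi.single_apply] at this
    · exact decomp3 (φ (e3 0))
    · rw [h1]; ring_nf
    · have := decomp3 (φ (e3 2))
      rw [hw0] at this
      simpa using this
  · rintro ⟨x, y, z, u, v, hx, hv, h0, h1, h2⟩ a b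
    have hval : ∀ w : Fin 3 → ℂ, φ w 0 = x * w 0 := by
      intro w
      conv_lhs => rw [decomp3 w]
      rw [map_add, map_add, map_smul, map_smul, map_smul, h0, h1, h2]
      simp [e3, Pi.single_apply]
      ring
    rw [mul_eq_smul, mul_eq_smul, map_smul, h1, hval a, hval b]
    rw [smul_smul]
    ring_nf
end

section
/- The 4-dimensional complex algebra C with basis e1,e2,e3,e4 and nonzero products e1e1 = e2, e2e1 = e4, e2e2 = e3 is a nilpotent CD-algebra whose annihilator is 2-dimensional, spanned by e3 and e4. -/
/-- Basis vectors of ℂ⁴. -/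
noncomputable def e4 (i : Fin 4) : Fin 4 → ℂ := Pi.single i 1

/-- The algebra with e1e1 = e2, e2e1 = e4, e2e2 = e3. -/
noncomputable def mulC405 (u v : Fin 4 → ℂ) : Fin 4 → ℂ :=
  Pi.single (1 : Fin 4) (u 0 * v 0) + Pi.single (2 : Fin 4) (u 1 * v 1) +
    Pi.single (3 : Fin 4) (u 1 * v 0)

lemma mA0 (u v : Fin 4 → ℂ) : mulC405 u v 0 = 0 := by simp [mulC405, Pi.single_apply]
lemma mA1 (u v : Fin 4 → ℂ) : mulC405 u v 1 = u 0 * v 0 := by simp [mulC405, Pi.single_apply]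
lemma mA2 (u v : Fin 4 → ℂ) : mulC405 u v 2 = u 1 * v 1 := by simp [mulC405, Pi.single_apply]
lemma mA3 (u v : Fin 4 → ℂ) : mulC405 u v 3 = u 1 * v 0 := by simp [mulC405, Pi.single_apply]

lemma mul_zero_left {u : Fin 4 → ℂ} (h0 : u 0 = 0) (h1 : u 1 = 0) (v : Fin 4 → ℂ) :
    mulC405 u v = 0 := by
  funext i; fin_cases i <;> simp [mulC405, Pi.single_apply, h0, h1]

lemma mul_zero_right {u : Fin 4 → ℂ} (h0 : u 0 = 0) (h1 : u 1 = 0) (v : Fin 4 → ℂ) :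
    mulC405 v u = 0 := by
  funext i; fin_cases i <;> simp [mulC405, Pi.single_apply, h0, h1]

lemma magLen_pos {A : Type*} (w : FreeMagma A) : 1 ≤ magLen w := by
  induction w with
  | ih1 a => simp [magLen]
  | ih2 u v hu hv => simp only [magLen]; omega

lemma ev0 (w : FreeMagma (Fin 4 → ℂ)) (h : 2 ≤ magLen w) : magEval mulC405 w 0 = 0 := by
  cases w with
  | of a => simp [magLen] at h
  | mul u v => exact mA0 _ _

lemma ev1 (w : FreeMagma (Fin 4 → ℂ)) (h : 3 ≤ magLen w) : magEval mulC405 w 1 = 0 := by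
  cases w with
  | of a => simp [magLen] at h
  | mul u v =>
    simp only [magEval, mA1]
    simp only [magLen] at h
    rcases le_or_gt 2 (magLen u) with hu | hu
    · rw [ev0 u hu]; ring
    · have hv : 2 ≤ magLen v := by omega
      rw [ev0 v hv]; ring

/-- The algebra e1e1=e2, e2e1=e4, e2e2=e3 is a nilpotent CD-algebra whose
annihilator is spanned by e3 and e4. -/
theorem C405_is_nilpotent_CD :
    IsCD mulC405 ∧ IsNilpotentMul mulC405 ∧
      {x : Fin 4 → ℂ | ∀ a : Fin 4 → ℂ, mulC405 x a = 0 ∧ mulC405 a x = 0} =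
        ↑(Submodule.span ℂ {e4 2, e4 3}) := by
  refine ⟨⟨?_, ?_, ?_⟩, ?_, ?_⟩
  · intro a b x y; funext i; fin_cases i <;>
      simp [mulC405, Pi.single_apply] <;> ring
  · intro a b x y; funext i; fin_cases i <;>
      simp [mulC405, Pi.single_apply] <;> ring
  · intro a b x y; funext i; fin_cases i <;>
      simp [mulC405, Pi.single_apply] <;> ring
  · refine ⟨5, fun w h => ?_⟩
    cases w with
    | of a => simp [magLen] at h
    | mul u v =>
      simp only [magLen] at h
      have hu1 := magLen_pos u
      have hv1 := magLen_pos v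
      simp only [magEval]
      rcases le_or_gt 3 (magLen u) with hu | hu
      · exact mul_zero_left (ev0 u (by omega)) (ev1 u hu) _
      · have hv : 3 ≤ magLen v := by omega
        exact mul_zero_right (ev0 v (by omega)) (ev1 v hv) _
  · ext x
    simp only [Set.mem_setOf_eq, SetLike.mem_coe]
    rw [Submodule.mem_span_pair]
    constructor
    · intro h
      have h1 := congrFun (h (e4 0)).1 1
      have h3 := congrFun (h (e4 0)).1 3
      rw [mA1] at h1
      rw [mA3] at h3
      have he : e4 0 0 = 1 := by simp [e4]
      rw [he, mul_one] at h1 h3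
      simp only [Pi.zero_apply] at h1 h3
      refine ⟨x 2, x 3, ?_⟩
      funext i; fin_cases i <;>
        simp [e4, Pi.single_apply, h1, h3]
    · rintro ⟨a, b, rfl⟩ c
      have h0 : (a • e4 2 + b • e4 3) 0 = 0 := by simp [e4, Pi.single_apply]
      have h1 : (a • e4 2 + b • e4 3) 1 = 0 := by simp [e4, Pi.single_apply]
      exact ⟨mul_zero_left h0 h1 c, mul_zero_right h0 h1 c⟩
end
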